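/- arXiv:2010.03580 — 2 statements merged into one kernel-verified Lean document; each statement's English description precedes it below -/
import Mathlib

section
/- For every N ∈ ℕ, the process L̲^N := Γ_N^{(N)}[0] (the N-th iterate of Γ_N applied to the zero process) is the minimal solution to the N-particle system, and moreover the error bound ‖Γ_N^{(k)}[0] − L̲^N‖_∞ ≤ (N−k)^+/N holds almost surely for every k ∈ ℕ, where ‖·‖_∞ is the uniform norm on [0,∞). -/
open MeasureTheory ProbabilityTheory Filter Set
open scoped ENNReal NNReal Topology Classical

noncomputable section

/-! ### The space `M` of distribution functions on `[0,∞]` -/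

/-- Membership in the space `M` of cumulative distribution functions of probability
measures on `[0,∞]`, encoded as functions on `ℝ` extended by `0` on negative times
(the value at the point `∞` is by definition `1` and is not encoded). -/
def InM (ℓ : ℝ → ℝ) : Prop :=
  Monotone ℓ ∧ (∀ t : ℝ, ContinuousWithinAt ℓ (Ici t) t) ∧
    (∀ t : ℝ, t < 0 → ℓ t = 0) ∧ (∀ t : ℝ, ℓ t ≤ 1)

def MSet : Set (ℝ → ℝ) := {ℓ | InM ℓ}

/-- Convergence in `M`, i.e. weak convergence of the corresponding probability measures
on `[0,∞]`: pointwise convergence at every continuity point (there is nothing to check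
at the point `∞`, where all elements of `M` take the value `1`). -/
def MConv (ℓn : ℕ → ℝ → ℝ) (ℓ : ℝ → ℝ) : Prop :=
  ∀ t : ℝ, ContinuousAt ℓ t → Tendsto (fun n => ℓn n t) atTop (nhds (ℓ t))

/-- The Lévy metric on `M`. -/
def levyDist (f g : ℝ → ℝ) : ℝ :=
  sInf {ε : ℝ | 0 < ε ∧ ∀ t : ℝ, 0 ≤ t → g t ≤ f (t + ε) + ε ∧ f (t - ε) - ε ≤ g t}

/-! ### Brownian motion -/

/-- `B` is a standard Brownian motion (on `[0,∞)`) under `P`. -/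
def IsBrownianMotion {Ω : Type*} [MeasurableSpace Ω] (P : Measure Ω) (B : ℝ → Ω → ℝ) : Prop :=
  (∀ t : ℝ, Measurable (B t)) ∧
  (∀ᵐ ω ∂P, B 0 ω = 0 ∧ Continuous fun t => B t ω) ∧
  (∀ s t : ℝ, 0 ≤ s → s ≤ t →
    Measure.map (fun ω => B t ω - B s ω) P = gaussianReal 0 (Real.toNNReal (t - s))) ∧
  (∀ (n : ℕ) (ts : ℕ → ℝ), Monotone ts → 0 ≤ ts 0 →
    iIndepFun
      (fun i : Fin n => fun ω => B (ts (i.1 + 1)) ω - B (ts i.1) ω) P)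

/-! ### The McKean--Vlasov problem -/

/-- The event that the process `X_s = X0 + B_s - α Λ_s` hits `(-∞,0]` by time `t`.
By right-continuity this is the event `{τ ≤ t}` for `τ = inf{s ≥ 0 : X_s ≤ 0}`. -/
def mvHitBy {Ω : Type*} (α : ℝ) (X0 : Ω → ℝ) (B : ℝ → Ω → ℝ) (Λ : ℝ → ℝ) (t : ℝ) : Set Ω :=
  {ω | ∃ s, 0 ≤ s ∧ s ≤ t ∧ X0 ω + B s ω - α * Λ s ≤ 0}

/-- `Λ` solves the McKean--Vlasov problem `Λ_t = P(τ ≤ t)`,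
`τ = inf{t ≥ 0 : X0 + B_t - αΛ_t ≤ 0}` (with `Λ` extended by `0` on negative times). -/
def IsMVSolution {Ω : Type*} [MeasurableSpace Ω] (P : Measure Ω) (α : ℝ)
    (X0 : Ω → ℝ) (B : ℝ → Ω → ℝ) (Λ : ℝ → ℝ) : Prop :=
  InM Λ ∧ ∀ t : ℝ, 0 ≤ t → Λ t = (P (mvHitBy α X0 B Λ t)).toReal

/-- Minimal solution of the McKean--Vlasov problem. -/
def IsMinimalMVSolution {Ω : Type*} [MeasurableSpace Ω] (P : Measure Ω) (α : ℝ)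
    (X0 : Ω → ℝ) (B : ℝ → Ω → ℝ) (Λ : ℝ → ℝ) : Prop :=
  IsMVSolution P α X0 B Λ ∧ ∀ Λ' : ℝ → ℝ, IsMVSolution P α X0 B Λ' → ∀ t, Λ t ≤ Λ' t

/-- The fixed-point operator `Γ` of the McKean--Vlasov problem:
`Γ[ℓ]_t = P(τ^ℓ ≤ t)` where `τ^ℓ = inf{t ≥ 0 : X0 + B_t - αℓ_t ≤ 0}`. -/
def Gamma {Ω : Type*} [MeasurableSpace Ω] (P : Measure Ω) (α : ℝ)
    (X0 : Ω → ℝ) (B : ℝ → Ω → ℝ) (ℓ : ℝ → ℝ) : ℝ → ℝ :=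
  fun t => if 0 ≤ t then (P (mvHitBy α X0 B ℓ t)).toReal else 0

/-- The solution process of the McKean--Vlasov problem, as a path in `D([-1,∞))`,
extended by its initial value on negative times. -/
def mvPath {Ω : Type*} (α : ℝ) (X0 : Ω → ℝ) (B : ℝ → Ω → ℝ) (Λ : ℝ → ℝ) (ω : Ω) : ℝ → ℝ :=
  fun t => if t < 0 then X0 ω + B 0 ω else X0 ω + B t ω - α * Λ t

/-- The event `{τ ≥ t}` that the solution process survives up to time `t`. -/
def mvSurvive {Ω : Type*} (α : ℝ) (X0 : Ω → ℝ) (B : ℝ → Ω → ℝ) (Λ : ℝ → ℝ) (t : ℝ) : Set Ω :=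
  {ω | ∀ s, 0 ≤ s → s < t → 0 < X0 ω + B s ω - α * Λ s}

/-- A physical solution of the McKean--Vlasov problem: a solution whose jump sizes satisfy
`ΔΛ_t = inf{x > 0 : P(τ ≥ t, X_{t-} ∈ [0, αx]) < x}` for all `t ≥ 0`. -/
def IsPhysicalMVSolution {Ω : Type*} [MeasurableSpace Ω] (P : Measure Ω) (α : ℝ)
    (X0 : Ω → ℝ) (B : ℝ → Ω → ℝ) (Λ : ℝ → ℝ) : Prop :=
  IsMVSolution P α X0 B Λ ∧ ∀ t : ℝ, 0 ≤ t →
    Λ t - Function.leftLim Λ t =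
      sInf {x : ℝ | 0 < x ∧
        (P {ω | ω ∈ mvSurvive α X0 B Λ t ∧
          Function.leftLim (mvPath α X0 B Λ ω) t ∈ Icc 0 (α * x)}).toReal < x}

/-! ### The particle system -/

/-- The fixed-point operator `Γ_N` of the `N`-particle system, applied to a càdlàg
process `L`. -/
def GammaN {Ω : Type*} (α : ℝ) (N : ℕ) (X0 : Fin N → Ω → ℝ) (B : Fin N → ℝ → Ω → ℝ)
    (L : ℝ → Ω → ℝ) : ℝ → Ω → ℝ :=
  fun t ω => if 0 ≤ t then
    (N : ℝ)⁻¹ * ∑ i : Fin N,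
      (if ∃ s, 0 ≤ s ∧ s ≤ t ∧ X0 i ω + B i s ω - α * L s ω ≤ 0 then (1 : ℝ) else 0)
  else 0

/-- A solution of the `N`-particle system: a `[0,1]`-valued non-decreasing càdlàg process
`L` (extended by `0` on negative times) such that, almost surely, `L` is a fixed point
of `Γ_N`. -/
def IsParticleSolution {Ω : Type*} [MeasurableSpace Ω] (P : Measure Ω) (α : ℝ) (N : ℕ)
    (X0 : Fin N → Ω → ℝ) (B : Fin N → ℝ → Ω → ℝ) (L : ℝ → Ω → ℝ) : Prop :=
  ∀ᵐ ω ∂P, InM (fun t => L t ω) ∧ ∀ t : ℝ, L t ω = GammaN α N X0 B L t ω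

/-- Minimal solution of the `N`-particle system. -/
def IsMinimalParticleSolution {Ω : Type*} [MeasurableSpace Ω] (P : Measure Ω) (α : ℝ) (N : ℕ)
    (X0 : Fin N → Ω → ℝ) (B : Fin N → ℝ → Ω → ℝ) (L : ℝ → Ω → ℝ) : Prop :=
  IsParticleSolution P α N X0 B L ∧
    ∀ L' : ℝ → Ω → ℝ, IsParticleSolution P α N X0 B L' → ∀ᵐ ω ∂P, ∀ t, L t ω ≤ L' t ω

/-- The path of particle `i`, extended by its initial value on negative times. -/
def psPath {Ω : Type*} (α : ℝ) (N : ℕ) (X0 : Fin N → Ω → ℝ) (B : Fin N → ℝ → Ω → ℝ)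
    (L : ℝ → Ω → ℝ) (i : Fin N) (ω : Ω) : ℝ → ℝ :=
  fun t => if t < 0 then X0 i ω + B i 0 ω else X0 i ω + B i t ω - α * L t ω

/-- A physical solution of the `N`-particle system: for all `t ≥ 0`,
`ΔL_t = inf{k/N ≥ 0 : k ∈ ℕ, ν^N_{t-}([0, αk/N]) ≤ k/N}`, where `N ν^N_{t-}(A)` counts the
particles that survive up to time `t` whose left limit at `t` lies in `A`. -/
def IsPhysicalParticleSolution {Ω : Type*} [MeasurableSpace Ω] (P : Measure Ω) (α : ℝ) (N : ℕ)
    (X0 : Fin N → Ω → ℝ) (B : Fin N → ℝ → Ω → ℝ) (L : ℝ → Ω → ℝ) : Prop :=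
  IsParticleSolution P α N X0 B L ∧
  ∀ᵐ ω ∂P, ∀ t : ℝ, 0 ≤ t →
    L t ω - Function.leftLim (fun s => L s ω) t =
      sInf {r : ℝ | ∃ k : ℕ, r = (k : ℝ) / N ∧
        (N : ℝ)⁻¹ * (∑ i : Fin N,
          (if ((∀ s, 0 ≤ s → s < t → 0 < X0 i ω + B i s ω - α * L s ω) ∧
              Function.leftLim (psPath α N X0 B L i ω) t ∈ Icc (0 : ℝ) (α * (k : ℝ) / N))
            then (1 : ℝ) else 0)) ≤ (k : ℝ) / N}

/-! ### Skorokhod's M1 topology -/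

/-- The completed graph of the path `x`, viewed as a path on `[a,b]`. -/
def m1Graph (a b : ℝ) (x : ℝ → ℝ) : Set (ℝ × ℝ) :=
  {p | p.1 ∈ Icc a b ∧ min (Function.leftLim x p.1) (x p.1) ≤ p.2 ∧
    p.2 ≤ max (Function.leftLim x p.1) (x p.1)}

/-- The traversal order on the completed graph of `x`. -/
def m1GraphLE (x : ℝ → ℝ) (p q : ℝ × ℝ) : Prop :=
  p.1 < q.1 ∨ (p.1 = q.1 ∧ |Function.leftLim x p.1 - p.2| ≤ |Function.leftLim x q.1 - q.2|)

/-- `(r,u)` is a parametric representation of the completed graph of `x` on `[a,b]`: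
a continuous, monotone (for the traversal order) surjection from `[0,1]` onto the graph. -/
def IsParamRep (a b : ℝ) (x : ℝ → ℝ) (r u : ℝ → ℝ) : Prop :=
  ContinuousOn r (Icc 0 1) ∧ ContinuousOn u (Icc 0 1) ∧
  (∀ s ∈ Icc (0 : ℝ) 1, (r s, u s) ∈ m1Graph a b x) ∧
  (∀ p ∈ m1Graph a b x, ∃ s ∈ Icc (0 : ℝ) 1, (r s, u s) = p) ∧
  (∀ s₁ ∈ Icc (0 : ℝ) 1, ∀ s₂ ∈ Icc (0 : ℝ) 1, s₁ ≤ s₂ →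
    m1GraphLE x (r s₁, u s₁) (r s₂, u s₂))

/-- Skorokhod's M1 metric on `D([a,b])`. -/
def m1DistOn (a b : ℝ) (x y : ℝ → ℝ) : ℝ :=
  sInf {m : ℝ | ∃ r₁ u₁ r₂ u₂ : ℝ → ℝ, IsParamRep a b x r₁ u₁ ∧ IsParamRep a b y r₂ u₂ ∧
    m = sSup ((fun s => max |r₁ s - r₂ s| |u₁ s - u₂ s|) '' Icc (0 : ℝ) 1)}

/-- Convergence in `D([a,∞))` with the M1 topology: M1 convergence on `[a,T]` for every
continuity point `T` of the limit. -/
def M1ConvOn (a : ℝ) (xn : ℕ → ℝ → ℝ) (x : ℝ → ℝ) : Prop :=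
  ∀ T : ℝ, a < T → ContinuousAt x T →
    Tendsto (fun n => m1DistOn a T (xn n) x) atTop (nhds 0)

/-- Càdlàg paths on `[a,∞)`, encoded as functions on `ℝ` which are constant on `(-∞,a]`. -/
def DSet (a : ℝ) : Set (ℝ → ℝ) :=
  {x | (∀ t : ℝ, ContinuousWithinAt x (Ici t) t) ∧
    (∀ t : ℝ, ∃ l : ℝ, Tendsto x (nhdsWithin t (Iio t)) (nhds l)) ∧
    ∀ t : ℝ, t ≤ a → x t = x a}

/-! ### The space `Ē = C([0,∞)) × M` -/

/-- Continuous paths on `[0,∞)`, encoded as functions on `ℝ` which are constant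
on `(-∞,0]` (this encodes the extension `ŵ`). -/
def CHat : Set (ℝ → ℝ) := {w | Continuous w ∧ ∀ t : ℝ, t ≤ 0 → w t = w 0}

/-- Convergence in `Ē = C([0,∞)) × M`: compact convergence in the first coordinate and
Lévy-metric (weak) convergence in the second. -/
def EBarConv (wn : ℕ → ℝ → ℝ) (ln : ℕ → ℝ → ℝ) (w ℓ : ℝ → ℝ) : Prop :=
  (∀ T : ℝ, 0 < T → TendstoUniformlyOn (fun n => wn n) w atTop (Icc 0 T)) ∧
  Tendsto (fun n => levyDist (ln n) ℓ) atTop (nhds 0)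

/-- The embedding `ι_α(w,ℓ) = ŵ - αℓ̌` (the extensions are already encoded in the
conventions for `CHat` and `M`). -/
def iotaAlpha (α : ℝ) (w ℓ : ℝ → ℝ) : ℝ → ℝ := fun t => w t - α * ℓ t

/-- The image `ι_α(Ē) ⊆ D([-1,∞))`. -/
def iotaImage (α : ℝ) : Set (ℝ → ℝ) :=
  {x | ∃ w ∈ CHat, ∃ ℓ ∈ MSet, x = iotaAlpha α w ℓ}

/-! ### Hitting-time functionals -/

/-- The path `x` hits `(-∞,0]` at some nonnegative time. -/
def hits (x : ℝ → ℝ) : Prop := ∃ s, 0 ≤ s ∧ x s ≤ 0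

/-- The first hitting time `τ₀(x) = inf{s ≥ 0 : x_s ≤ 0}`. -/
def tau0 (x : ℝ → ℝ) : ℝ := sInf {s : ℝ | 0 ≤ s ∧ x s ≤ 0}

/-- The loss functional `λ_t(x) = 1[τ₀(x) ≤ t]` (for right-continuous paths,
`τ₀(x) ≤ t` is equivalent to `∃ s ∈ [0,t], x_s ≤ 0`). -/
def lam (t : ℝ) (x : ℝ → ℝ) : ℝ := if ∃ s, 0 ≤ s ∧ s ≤ t ∧ x s ≤ 0 then 1 else 0

/-- The crossing property of a path: the path dips strictly below its level at the first
hitting time of `0`, immediately after that time. -/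
def SatisfiesCrossing (x : ℝ → ℝ) : Prop :=
  hits x → ∀ h : ℝ, 0 < h →
    sInf ((fun s => x (tau0 x + s) - x (tau0 x)) '' Icc 0 h) < 0

/-- The crossing property of a measure on path space. -/
def CrossingProp (μ : Measure (ℝ → ℝ)) : Prop :=
  ∀ h : ℝ, 0 < h →
    μ {x | hits x ∧ sInf ((fun s => x (tau0 x + s) - x (tau0 x)) '' Icc 0 h) = 0} = 0

/-- The loss function `t ↦ ⟨μ, λ_t⟩` of a measure on path space. -/
def lossOf (μ : Measure (ℝ → ℝ)) : ℝ → ℝ :=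
  fun t => if 0 ≤ t then (μ {x | ∃ s, 0 ≤ s ∧ s ≤ t ∧ x s ≤ 0}).toReal else 0

/-! ### Weak convergence, compactness and tightness -/

/-- A bounded measurable function on path space which is sequentially continuous for the
M1 topology on `D([a,∞))`. -/
def BddM1ContFun (a : ℝ) (f : (ℝ → ℝ) → ℝ) : Prop :=
  Measurable f ∧ (∃ C : ℝ, ∀ x, |f x| ≤ C) ∧
  ∀ (xn : ℕ → ℝ → ℝ) (x : ℝ → ℝ), (∀ n, xn n ∈ DSet a) → x ∈ DSet a →
    M1ConvOn a xn x → Tendsto (fun n => f (xn n)) atTop (nhds (f x))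

/-- Weak convergence of measures on `D([a,∞))` (with the M1 topology). -/
def WeakConvM1 (a : ℝ) (μn : ℕ → Measure (ℝ → ℝ)) (μ : Measure (ℝ → ℝ)) : Prop :=
  ∀ f : (ℝ → ℝ) → ℝ, BddM1ContFun a f →
    Tendsto (fun n => ∫ x, f x ∂(μn n)) atTop (nhds (∫ x, f x ∂μ))

/-- A bounded measurable function on `Ē` which is sequentially continuous for the product
topology of `Ē`. -/
def BddEBarContFun (F : (ℝ → ℝ) × (ℝ → ℝ) → ℝ) : Prop :=
  Measurable F ∧ (∃ C : ℝ, ∀ p, |F p| ≤ C) ∧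
  ∀ (pn : ℕ → (ℝ → ℝ) × (ℝ → ℝ)) (p : (ℝ → ℝ) × (ℝ → ℝ)),
    (∀ n, pn n ∈ CHat ×ˢ MSet) → p ∈ CHat ×ˢ MSet →
    EBarConv (fun n => (pn n).1) (fun n => (pn n).2) p.1 p.2 →
    Tendsto (fun n => F (pn n)) atTop (nhds (F p))

/-- Weak convergence of measures on `Ē`. -/
def WeakConvEBar (ξn : ℕ → Measure ((ℝ → ℝ) × (ℝ → ℝ)))
    (ξ : Measure ((ℝ → ℝ) × (ℝ → ℝ))) : Prop :=
  ∀ F, BddEBarContFun F →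
    Tendsto (fun n => ∫ p, F p ∂(ξn n)) atTop (nhds (∫ p, F p ∂ξ))

/-- A (sequentially) compact subset of `D([a,∞))` with the M1 topology. -/
def SeqCompactM1 (a : ℝ) (K : Set (ℝ → ℝ)) : Prop :=
  K ⊆ DSet a ∧ ∀ xn : ℕ → ℝ → ℝ, (∀ n, xn n ∈ K) →
    ∃ y ∈ K, ∃ φ : ℕ → ℕ, StrictMono φ ∧ M1ConvOn a (fun n => xn (φ n)) y

/-- A (sequentially) compact subset of `Ē`. -/
def SeqCompactEBar (K : Set ((ℝ → ℝ) × (ℝ → ℝ))) : Prop :=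
  K ⊆ CHat ×ˢ MSet ∧ ∀ pn : ℕ → (ℝ → ℝ) × (ℝ → ℝ), (∀ n, pn n ∈ K) →
    ∃ q ∈ K, ∃ φ : ℕ → ℕ, StrictMono φ ∧
      EBarConv (fun n => (pn (φ n)).1) (fun n => (pn (φ n)).2) q.1 q.2

/-- A (sequentially) compact subset of `C([0,T])` with the uniform topology. -/
def SeqCompactUnifOn (T : ℝ) (K : Set (ℝ → ℝ)) : Prop :=
  (∀ w ∈ K, ContinuousOn w (Icc 0 T)) ∧ ∀ xn : ℕ → ℝ → ℝ, (∀ n, xn n ∈ K) →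
    ∃ y ∈ K, ∃ φ : ℕ → ℕ, StrictMono φ ∧
      TendstoUniformlyOn (fun n => xn (φ n)) y atTop (Icc 0 T)

/-- A (sequentially) compact set of probability measures on `D([a,∞))`, for the topology
of weak convergence. -/
def SeqCompactProbM1 (a : ℝ) (K : Set (Measure (ℝ → ℝ))) : Prop :=
  (∀ μ ∈ K, IsProbabilityMeasure μ) ∧
  ∀ μn : ℕ → Measure (ℝ → ℝ), (∀ n, μn n ∈ K) →
    ∃ ν ∈ K, ∃ φ : ℕ → ℕ, StrictMono φ ∧ WeakConvM1 a (fun n => μn (φ n)) ν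

/-- A (sequentially) compact set of probability measures on `Ē`, for the topology of weak
convergence. -/
def SeqCompactProbEBar (K : Set (Measure ((ℝ → ℝ) × (ℝ → ℝ)))) : Prop :=
  (∀ ξ ∈ K, IsProbabilityMeasure ξ) ∧
  ∀ ξn : ℕ → Measure ((ℝ → ℝ) × (ℝ → ℝ)), (∀ n, ξn n ∈ K) →
    ∃ ζ ∈ K, ∃ φ : ℕ → ℕ, StrictMono φ ∧ WeakConvEBar (fun n => ξn (φ n)) ζ

/-- A bounded function on `P(D([a,∞)))` which is sequentially continuous for weak
convergence. -/
def BddContProbM1Fun (a : ℝ) (F : Measure (ℝ → ℝ) → ℝ) : Prop :=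
  (∃ C : ℝ, ∀ μ, |F μ| ≤ C) ∧
  ∀ (μn : ℕ → Measure (ℝ → ℝ)) (μ : Measure (ℝ → ℝ)),
    (∀ n, IsProbabilityMeasure (μn n)) → IsProbabilityMeasure μ →
    WeakConvM1 a μn μ → Tendsto (fun n => F (μn n)) atTop (nhds (F μ))

/-- A bounded function on `P(Ē)` which is sequentially continuous for weak convergence. -/
def BddContProbEBarFun (F : Measure ((ℝ → ℝ) × (ℝ → ℝ)) → ℝ) : Prop :=
  (∃ C : ℝ, ∀ ξ, |F ξ| ≤ C) ∧
  ∀ (ξn : ℕ → Measure ((ℝ → ℝ) × (ℝ → ℝ))) (ξ : Measure ((ℝ → ℝ) × (ℝ → ℝ))),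
    (∀ n, IsProbabilityMeasure (ξn n)) → IsProbabilityMeasure ξ →
    WeakConvEBar ξn ξ → Tendsto (fun n => F (ξn n)) atTop (nhds (F ξ))

/-- `N`-exchangeability of a random vector. -/
def NExchangeable {Ω : Type*} [MeasurableSpace Ω] (P : Measure Ω) (N : ℕ)
    (X : Fin N → Ω → ℝ) : Prop :=
  ∀ σ : Equiv.Perm (Fin N),
    Measure.map (fun ω => fun i => X (σ i) ω) P = Measure.map (fun ω => fun i => X i ω) P

/-- The empirical measure of `N` random paths. -/
def empPathMeas {Ω : Type*} [MeasurableSpace Ω] (N : ℕ) (paths : Fin N → Ω → ℝ → ℝ)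
    (ω : Ω) : Measure (ℝ → ℝ) :=
  (N : ℝ≥0∞)⁻¹ • ∑ i : Fin N, Measure.dirac (paths i ω)

/-- The empirical measure of `N` random elements of `Ē`. -/
def empPairMeas {Ω : Type*} [MeasurableSpace Ω] (N : ℕ)
    (pairs : Fin N → Ω → (ℝ → ℝ) × (ℝ → ℝ)) (ω : Ω) : Measure ((ℝ → ℝ) × (ℝ → ℝ)) :=
  (N : ℝ≥0∞)⁻¹ • ∑ i : Fin N, Measure.dirac (pairs i ω)

/-- The canonical filtration generated by the coordinate pair process `(W_s, L_s)_{s ≤ t}`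
on `Ē`. -/
def pairFiltration (t : ℝ) : MeasurableSpace ((ℝ → ℝ) × (ℝ → ℝ)) :=
  ⨆ s ∈ Iic t, MeasurableSpace.comap
    (fun p : (ℝ → ℝ) × (ℝ → ℝ) => (p.1 s, p.2 s)) inferInstance

/-- Under the measure `ν` on `Ē`, the canonical process `W - W_0` is a Brownian motion
with respect to the filtration generated by `(W, L)`; in particular it is independent
of `W_0`. -/
def CanonicalBMPair (ν : Measure ((ℝ → ℝ) × (ℝ → ℝ))) : Prop :=
  (∀ᵐ p ∂ν, Continuous fun t : ℝ => p.1 t - p.1 0) ∧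
  (∀ t : ℝ, 0 ≤ t →
    Measurable[pairFiltration t] fun p : (ℝ → ℝ) × (ℝ → ℝ) => p.1 t - p.1 0) ∧
  (∀ s t : ℝ, 0 ≤ s → s ≤ t →
    Measure.map (fun p : (ℝ → ℝ) × (ℝ → ℝ) => p.1 t - p.1 s) ν
        = gaussianReal 0 (Real.toNNReal (t - s)) ∧
      Indep (MeasurableSpace.comap (fun p : (ℝ → ℝ) × (ℝ → ℝ) => p.1 t - p.1 s)
        inferInstance) (pairFiltration s) ν) ∧
  IndepFun (fun p : (ℝ → ℝ) × (ℝ → ℝ) => p.1 0)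
    (fun p : (ℝ → ℝ) × (ℝ → ℝ) => fun t : ℝ => p.1 t - p.1 0) ν


/-! ### Auxiliary lemmas for Statement 2 -/

section ParticleAux

variable {Ω : Type} (α : ℝ) (N : ℕ) (X0 : Fin N → Ω → ℝ) (B : Fin N → ℝ → Ω → ℝ)

lemma gammaN_eq (L : ℝ → Ω → ℝ) (t : ℝ) (ω : Ω) (ht : 0 ≤ t) :
    GammaN α N X0 B L t ω =
      ((Finset.univ.filter (fun i : Fin N =>
        ∃ s, 0 ≤ s ∧ s ≤ t ∧ X0 i ω + B i s ω - α * L s ω ≤ 0)).card : ℝ) / N := by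
  unfold GammaN
  rw [if_pos ht, Finset.sum_boole, div_eq_inv_mul]

lemma gammaN_neg (L : ℝ → Ω → ℝ) (t : ℝ) (ω : Ω) (ht : t < 0) :
    GammaN α N X0 B L t ω = 0 := by
  unfold GammaN
  rw [if_neg (not_le.mpr ht)]

lemma gammaN_exists_nat (L : ℝ → Ω → ℝ) (t : ℝ) (ω : Ω) :
    ∃ m : ℕ, GammaN α N X0 B L t ω = (m : ℝ) / N := by
  rcases lt_or_ge t 0 with ht | ht
  · exact ⟨0, by simp [gammaN_neg α N X0 B L t ω ht]⟩
  · exact ⟨_, gammaN_eq α N X0 B L t ω ht⟩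

lemma gammaN_nonneg (L : ℝ → Ω → ℝ) (t : ℝ) (ω : Ω) : 0 ≤ GammaN α N X0 B L t ω := by
  rcases lt_or_ge t 0 with ht | ht
  · rw [gammaN_neg α N X0 B L t ω ht]
  · rw [gammaN_eq α N X0 B L t ω ht]; positivity

lemma gammaN_le_one (hN : 1 ≤ N) (L : ℝ → Ω → ℝ) (t : ℝ) (ω : Ω) :
    GammaN α N X0 B L t ω ≤ 1 := by
  have hN0 : (0:ℝ) < N := by exact_mod_cast Nat.pos_of_ne_zero (by omega)
  rcases lt_or_ge t 0 with ht | ht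
  · rw [gammaN_neg α N X0 B L t ω ht]; norm_num
  · rw [gammaN_eq α N X0 B L t ω ht, div_le_one hN0]
    have := Finset.card_filter_le (Finset.univ : Finset (Fin N))
      (fun i : Fin N => ∃ s, 0 ≤ s ∧ s ≤ t ∧ X0 i ω + B i s ω - α * L s ω ≤ 0)
    simp only [Finset.card_univ, Fintype.card_fin] at this
    exact_mod_cast this

lemma gammaN_mono_t (L : ℝ → Ω → ℝ) (ω : Ω) :
    Monotone (fun t => GammaN α N X0 B L t ω) := by
  intro t1 t2 h12
  show GammaN α N X0 B L t1 ω ≤ GammaN α N X0 B L t2 ω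
  rcases lt_or_ge t1 0 with ht | ht
  · rw [gammaN_neg α N X0 B L t1 ω ht]; exact gammaN_nonneg α N X0 B L t2 ω
  · rw [gammaN_eq α N X0 B L t1 ω ht, gammaN_eq α N X0 B L t2 ω (ht.trans h12)]
    have hN0 : (0:ℝ) ≤ N := Nat.cast_nonneg N
    have hcard := Finset.card_le_card (s := Finset.univ.filter (fun i : Fin N =>
        ∃ s, 0 ≤ s ∧ s ≤ t1 ∧ X0 i ω + B i s ω - α * L s ω ≤ 0))
      (t := Finset.univ.filter (fun i : Fin N =>
        ∃ s, 0 ≤ s ∧ s ≤ t2 ∧ X0 i ω + B i s ω - α * L s ω ≤ 0)) (by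
      intro i hi
      simp only [Finset.mem_filter] at hi ⊢
      obtain ⟨hiu, s, hs0, hst, hx⟩ := hi
      exact ⟨hiu, s, hs0, hst.trans h12, hx⟩)
    gcongr

lemma gammaN_mono_L (hα : 0 ≤ α) (L L' : ℝ → Ω → ℝ) (ω : Ω)
    (h : ∀ s, L s ω ≤ L' s ω) (t : ℝ) :
    GammaN α N X0 B L t ω ≤ GammaN α N X0 B L' t ω := by
  rcases lt_or_ge t 0 with ht | ht
  · rw [gammaN_neg α N X0 B L t ω ht]; exact gammaN_nonneg α N X0 B L' t ω
  · rw [gammaN_eq α N X0 B L t ω ht, gammaN_eq α N X0 B L' t ω ht]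
    have hcard := Finset.card_le_card (s := Finset.univ.filter (fun i : Fin N =>
        ∃ s, 0 ≤ s ∧ s ≤ t ∧ X0 i ω + B i s ω - α * L s ω ≤ 0))
      (t := Finset.univ.filter (fun i : Fin N =>
        ∃ s, 0 ≤ s ∧ s ≤ t ∧ X0 i ω + B i s ω - α * L' s ω ≤ 0)) (by
      intro i hi
      simp only [Finset.mem_filter] at hi ⊢
      obtain ⟨hiu, s, hs0, hst, hx⟩ := hi
      refine ⟨hiu, s, hs0, hst, ?_⟩
      have : α * L s ω ≤ α * L' s ω := mul_le_mul_of_nonneg_left (h s) hα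
      linarith)
    gcongr

lemma gammaN_congr (L L' : ℝ → Ω → ℝ) (ω : Ω) (t : ℝ)
    (h : ∀ s, 0 ≤ s → s ≤ t → L s ω = L' s ω) :
    GammaN α N X0 B L t ω = GammaN α N X0 B L' t ω := by
  rcases lt_or_ge t 0 with ht | ht
  · rw [gammaN_neg α N X0 B L t ω ht, gammaN_neg α N X0 B L' t ω ht]
  · rw [gammaN_eq α N X0 B L t ω ht, gammaN_eq α N X0 B L' t ω ht]
    congr 3
    apply Finset.filter_congr
    intro i _
    constructor
    · rintro ⟨s, hs0, hst, hx⟩; exact ⟨s, hs0, hst, by rw [← h s hs0 hst]; exact hx⟩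
    · rintro ⟨s, hs0, hst, hx⟩; exact ⟨s, hs0, hst, by rw [h s hs0 hst]; exact hx⟩

end ParticleAux


/-- The iterates `Γ_N^(k)[0]`. -/
def iterL {Ω : Type} (α : ℝ) (N : ℕ) (X0 : Fin N → Ω → ℝ) (B : Fin N → ℝ → Ω → ℝ)
    (k : ℕ) : ℝ → Ω → ℝ :=
  (GammaN α N X0 B)^[k] (fun _ : ℝ => fun _ : Ω => (0 : ℝ))

section IterAux

variable {Ω : Type} (α : ℝ) (N : ℕ) (X0 : Fin N → Ω → ℝ) (B : Fin N → ℝ → Ω → ℝ)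

lemma iterL_succ (k : ℕ) :
    iterL α N X0 B (k + 1) = GammaN α N X0 B (iterL α N X0 B k) :=
  Function.iterate_succ_apply' _ _ _

lemma iterL_nonneg (k : ℕ) (t : ℝ) (ω : Ω) : 0 ≤ iterL α N X0 B k t ω := by
  cases k with
  | zero => exact le_refl 0
  | succ k => rw [iterL_succ]; exact gammaN_nonneg α N X0 B _ t ω

lemma iterL_le_one (hN : 1 ≤ N) (k : ℕ) (t : ℝ) (ω : Ω) : iterL α N X0 B k t ω ≤ 1 := by
  cases k with
  | zero => exact zero_le_one
  | succ k => rw [iterL_succ]; exact gammaN_le_one α N X0 B hN _ t ω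

lemma iterL_neg (k : ℕ) (t : ℝ) (ω : Ω) (ht : t < 0) : iterL α N X0 B k t ω = 0 := by
  cases k with
  | zero => rfl
  | succ k => rw [iterL_succ]; exact gammaN_neg α N X0 B _ t ω ht

lemma iterL_exists_nat (k : ℕ) (t : ℝ) (ω : Ω) :
    ∃ m : ℕ, iterL α N X0 B k t ω = (m : ℝ) / N := by
  cases k with
  | zero => exact ⟨0, by simp [iterL]⟩
  | succ k => rw [iterL_succ]; exact gammaN_exists_nat α N X0 B _ t ω

lemma iterL_mono_t (k : ℕ) (ω : Ω) : Monotone (fun t => iterL α N X0 B k t ω) := by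
  cases k with
  | zero => exact monotone_const
  | succ k =>
    rw [iterL_succ]
    exact gammaN_mono_t α N X0 B _ ω

lemma iterL_mono_k (hα : 0 ≤ α) (k : ℕ) (t : ℝ) (ω : Ω) :
    iterL α N X0 B k t ω ≤ iterL α N X0 B (k + 1) t ω := by
  induction k generalizing t ω with
  | zero => exact iterL_nonneg α N X0 B 1 t ω
  | succ k ih =>
    rw [iterL_succ, iterL_succ]
    exact gammaN_mono_L α N X0 B hα _ _ ω (fun s => ih s ω) t

lemma iterL_mono_k' (hα : 0 ≤ α) {k j : ℕ} (hkj : k ≤ j) (t : ℝ) (ω : Ω) :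
    iterL α N X0 B k t ω ≤ iterL α N X0 B j t ω := by
  induction j with
  | zero =>
    have : k = 0 := by omega
    subst this; exact le_refl _
  | succ j ih =>
    rcases Nat.lt_or_ge k (j + 1) with h | h
    · exact (ih (by omega)).trans (iterL_mono_k α N X0 B hα j t ω)
    · have : k = j + 1 := by omega
      subst this; exact le_refl _

/-- Key counting lemma: if the `k`-th iterate still increases at time `t`, then its value
is at least `k/N`. -/
lemma iterL_key (hα : 0 ≤ α) (hN : 1 ≤ N) (k : ℕ) :
    ∀ t ω, iterL α N X0 B k t ω < iterL α N X0 B (k + 1) t ω →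
      (k : ℝ) / N ≤ iterL α N X0 B k t ω := by
  have hN0 : (0:ℝ) < N := by exact_mod_cast Nat.pos_of_ne_zero (by omega)
  induction k with
  | zero => intro t ω _; simp [iterL]
  | succ k ih =>
    intro t ω hlt
    -- there must exist `s ∈ [0, t]` where the previous iterates differ
    by_cases hcong : ∀ s, 0 ≤ s → s ≤ t → iterL α N X0 B k s ω = iterL α N X0 B (k + 1) s ω
    · exfalso
      have heq : GammaN α N X0 B (iterL α N X0 B k) t ω
          = GammaN α N X0 B (iterL α N X0 B (k + 1)) t ω :=
        gammaN_congr α N X0 B _ _ ω t hcong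
      rw [iterL_succ α N X0 B k] at hlt
      rw [iterL_succ α N X0 B (k + 1)] at hlt
      exact absurd heq (ne_of_lt hlt)
    · push_neg at hcong
      obtain ⟨s, hs0, hst, hne⟩ := hcong
      have hslt : iterL α N X0 B k s ω < iterL α N X0 B (k + 1) s ω :=
        lt_of_le_of_ne (iterL_mono_k α N X0 B hα k s ω) hne
      have hk : (k : ℝ) / N ≤ iterL α N X0 B k s ω := ih s ω hslt
      -- values are multiples of 1/N, so a strict increase is at least 1/N
      obtain ⟨m, hm⟩ := iterL_exists_nat α N X0 B k s ω
      obtain ⟨m', hm'⟩ := iterL_exists_nat α N X0 B (k + 1) s ω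
      have hkm : (k : ℝ) ≤ m := by
        rw [hm] at hk; exact (div_le_div_iff_of_pos_right hN0).mp hk |>.trans le_rfl
      have hmm' : (m : ℝ) < m' := by
        rw [hm, hm'] at hslt; exact (div_lt_div_iff_of_pos_right hN0).mp hslt
      have hstep : ((k : ℝ) + 1) / N ≤ iterL α N X0 B (k + 1) s ω := by
        rw [hm']
        have h1 : (k : ℝ) + 1 ≤ (m' : ℝ) := by
          have : (k : ℕ) < m' := by exact_mod_cast hkm.trans_lt hmm'
          exact_mod_cast this
        exact div_le_div_of_nonneg_right h1 hN0.le |>.trans le_rfl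
      calc (((k + 1 : ℕ)) : ℝ) / N = ((k : ℝ) + 1) / N := by push_cast; ring
        _ ≤ iterL α N X0 B (k + 1) s ω := hstep
        _ ≤ iterL α N X0 B (k + 1) t ω := iterL_mono_t α N X0 B (k + 1) ω hst

end IterAux


section StabAux

variable {Ω : Type} (α : ℝ) (N : ℕ) (X0 : Fin N → Ω → ℝ) (B : Fin N → ℝ → Ω → ℝ)

/-- The `N`-th iterate is a fixed point. -/
lemma iterL_stab (hα : 0 ≤ α) (hN : 1 ≤ N) (t : ℝ) (ω : Ω) :
    iterL α N X0 B (N + 1) t ω = iterL α N X0 B N t ω := by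
  have hN0 : (0:ℝ) < N := by exact_mod_cast Nat.pos_of_ne_zero (by omega)
  refine le_antisymm ?_ (iterL_mono_k α N X0 B hα N t ω)
  by_contra hlt
  push_neg at hlt
  have h1 : (N : ℝ) / N ≤ iterL α N X0 B N t ω := iterL_key α N X0 B hα hN N t ω hlt
  rw [div_self hN0.ne'] at h1
  have h2 : iterL α N X0 B (N + 1) t ω ≤ 1 := iterL_le_one α N X0 B hN (N + 1) t ω
  linarith

lemma iterL_stab' (hα : 0 ≤ α) (hN : 1 ≤ N) (m : ℕ) (t : ℝ) (ω : Ω) :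
    iterL α N X0 B (N + m) t ω = iterL α N X0 B N t ω := by
  induction m generalizing t ω with
  | zero => rfl
  | succ m ih =>
    have : iterL α N X0 B (N + m + 1) t ω = iterL α N X0 B (N + 1) t ω := by
      rw [iterL_succ α N X0 B (N + m), iterL_succ α N X0 B N]
      exact gammaN_congr α N X0 B _ _ ω t (fun s _ _ => ih s ω)
    rw [show N + (m + 1) = N + m + 1 from rfl, this, iterL_stab α N X0 B hα hN t ω]

/-- General lemma behind the error bound: if `ℓ_k(t) < ℓ_{j+1}(t)` with `k ≤ j`,
then `ℓ_k(t) ≥ k/N`. -/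
lemma iterL_keyJ (hα : 0 ≤ α) (hN : 1 ≤ N) (j : ℕ) :
    ∀ k ≤ j, ∀ t ω, iterL α N X0 B k t ω < iterL α N X0 B (j + 1) t ω →
      (k : ℝ) / N ≤ iterL α N X0 B k t ω := by
  have hN0 : (0:ℝ) < N := by exact_mod_cast Nat.pos_of_ne_zero (by omega)
  induction j with
  | zero =>
    intro k hk t ω hlt
    have : k = 0 := by omega
    subst this
    exact iterL_key α N X0 B hα hN 0 t ω hlt
  | succ j ih =>
    intro k hk t ω hlt
    rcases Nat.lt_or_ge k (j + 1) with h | h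
    · rcases lt_or_eq_of_le (iterL_mono_k' α N X0 B hα (show k ≤ j + 1 by omega) t ω)
        with h2 | h2
      · exact ih k (by omega) t ω h2
      · have h3 : iterL α N X0 B (j + 1) t ω < iterL α N X0 B (j + 2) t ω := by
          rw [← h2]; exact hlt
        have h4 := iterL_key α N X0 B hα hN (j + 1) t ω h3
        rw [← h2] at h4
        refine le_trans ?_ h4
        have hcast : (k : ℝ) ≤ ((j + 1 : ℕ) : ℝ) := by exact_mod_cast (show k ≤ j + 1 by omega)
        exact div_le_div_of_nonneg_right hcast hN0.le
    · have : k = j + 1 := by omega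
      subst this
      exact iterL_key α N X0 B hα hN (j + 1) t ω hlt

/-- Deterministic error bound. -/
lemma iterL_error (hα : 0 ≤ α) (hN : 1 ≤ N) (k : ℕ) (t : ℝ) (ω : Ω) :
    |iterL α N X0 B k t ω - iterL α N X0 B N t ω| ≤ max ((N : ℝ) - (k : ℝ)) 0 / N := by
  have hN0 : (0:ℝ) < N := by exact_mod_cast Nat.pos_of_ne_zero (by omega)
  rcases Nat.lt_or_ge k N with hk | hk
  · -- k < N
    have hle : iterL α N X0 B k t ω ≤ iterL α N X0 B N t ω :=
      iterL_mono_k' α N X0 B hα hk.le t ω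
    rw [abs_sub_comm, abs_of_nonneg (by linarith)]
    have hmax : max ((N : ℝ) - (k : ℝ)) 0 = (N : ℝ) - k := by
      apply max_eq_left
      have : (k : ℝ) ≤ N := by exact_mod_cast hk.le
      linarith
    rw [hmax]
    rcases eq_or_lt_of_le hle with heq | hlt
    · rw [← heq, sub_self]
      have : (k : ℝ) ≤ N := by exact_mod_cast hk.le
      exact div_nonneg (by linarith) hN0.le
    · have hNeq : N = (N - 1) + 1 := by omega
      have hkey : (k : ℝ) / N ≤ iterL α N X0 B k t ω := by
        apply iterL_keyJ α N X0 B hα hN (N - 1) k (by omega) t ω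
        rw [← hNeq]; exact hlt
      have hone : iterL α N X0 B N t ω ≤ 1 := iterL_le_one α N X0 B hN N t ω
      have : ((N : ℝ) - k) / N = 1 - (k : ℝ) / N := by
        field_simp
      rw [this]
      linarith
  · -- k ≥ N : the iterates have stabilized
    have : iterL α N X0 B k t ω = iterL α N X0 B N t ω := by
      have := iterL_stab' α N X0 B hα hN (k - N) t ω
      rwa [show N + (k - N) = k by omega] at this
    rw [this, sub_self, abs_zero]
    positivity

end StabAux


section ContAux

/-- Closedness of the hitting event for a right-continuous path. -/
lemma hit_closed (f : ℝ → ℝ) (hf : ∀ s, ContinuousWithinAt f (Ici s) s) (t : ℝ) (ht : 0 ≤ t)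
    (h : ∀ δ : ℝ, 0 < δ → ∃ s, 0 ≤ s ∧ s ≤ t + δ ∧ f s ≤ 0) :
    ∃ s, 0 ≤ s ∧ s ≤ t ∧ f s ≤ 0 := by
  set T : Set ℝ := {s | 0 ≤ s ∧ f s ≤ 0} with hT
  have hne : T.Nonempty := by
    obtain ⟨s, hs0, _, hfs⟩ := h 1 one_pos
    exact ⟨s, hs0, hfs⟩
  have hbdd : BddBelow T := ⟨0, fun s hs => hs.1⟩
  set s₀ := sInf T with hs₀
  have h0 : 0 ≤ s₀ := le_csInf hne (fun s hs => hs.1)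
  have hst : s₀ ≤ t := by
    apply le_of_forall_pos_le_add
    intro ε hε
    obtain ⟨s, hs0, hsle, hfs⟩ := h ε hε
    exact le_trans (csInf_le hbdd ⟨hs0, hfs⟩) hsle
  have hsub : T ⊆ Ici s₀ := fun s hs => csInf_le hbdd hs
  have hcl : s₀ ∈ closure T := csInf_mem_closure hne hbdd
  have hnebot : (nhdsWithin s₀ T).NeBot := mem_closure_iff_nhdsWithin_neBot.mp hcl
  have htd : Filter.Tendsto f (nhdsWithin s₀ T) (nhds (f s₀)) :=
    (hf s₀).mono hsub
  have hev : ∀ᶠ s in nhdsWithin s₀ T, f s ≤ 0 :=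
    eventually_nhdsWithin_of_forall (fun s hs => hs.2)
  exact ⟨s₀, h0, hst, le_of_tendsto htd hev⟩

variable {Ω : Type} (α : ℝ) (N : ℕ) (X0 : Fin N → Ω → ℝ) (B : Fin N → ℝ → Ω → ℝ)

/-- `Γ_N` preserves right-continuity (given continuous Brownian paths). -/
lemma gammaN_rightCont (L : ℝ → Ω → ℝ) (ω : Ω)
    (hL : ∀ s, ContinuousWithinAt (fun u => L u ω) (Ici s) s)
    (hB : ∀ i, Continuous (fun u => B i u ω)) (t : ℝ) :
    ContinuousWithinAt (fun u => GammaN α N X0 B L u ω) (Ici t) t := by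
  rcases lt_or_ge t 0 with ht | ht
  · -- on a neighbourhood of `t`, the function is identically `0`
    have hev : (fun u => GammaN α N X0 B L u ω) =ᶠ[nhdsWithin t (Ici t)] (fun _ => 0) := by
      filter_upwards [nhdsWithin_le_nhds (Iio_mem_nhds ht)] with u hu
      exact gammaN_neg α N X0 B L u ω hu
    exact (continuousWithinAt_const (b := (0:ℝ))).congr_of_eventuallyEq hev
      (gammaN_neg α N X0 B L t ω ht)
  · -- each indicator is eventually constant to the right of `t`
    have hind : ∀ i : Fin N, ∀ᶠ u in nhdsWithin t (Ici t),
        ((if ∃ s, 0 ≤ s ∧ s ≤ u ∧ X0 i ω + B i s ω - α * L s ω ≤ 0 then (1:ℝ) else 0)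
          = if ∃ s, 0 ≤ s ∧ s ≤ t ∧ X0 i ω + B i s ω - α * L s ω ≤ 0 then (1:ℝ) else 0) := by
      intro i
      by_cases hPt : ∃ s, 0 ≤ s ∧ s ≤ t ∧ X0 i ω + B i s ω - α * L s ω ≤ 0
      · filter_upwards [self_mem_nhdsWithin] with u (hu : t ≤ u)
        obtain ⟨s, hs0, hst, hx⟩ := hPt
        rw [if_pos ⟨s, hs0, hst.trans hu, hx⟩, if_pos ⟨s, hs0, hst, hx⟩]
      · -- find δ > 0 with no hit by time t + δ
        have hδ : ∃ δ : ℝ, 0 < δ ∧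
            ¬ ∃ s, 0 ≤ s ∧ s ≤ t + δ ∧ X0 i ω + B i s ω - α * L s ω ≤ 0 := by
          by_contra hcon
          push_neg at hcon
          apply hPt
          apply hit_closed (fun s => X0 i ω + B i s ω - α * L s ω) ?_ t ht
          · intro δ hδpos
            exact hcon δ hδpos
          · intro s
            exact ((continuousWithinAt_const.add ((hB i).continuousWithinAt)).sub
              (continuousWithinAt_const.mul (hL s)))
        obtain ⟨δ, hδpos, hnohit⟩ := hδ
        have hmem : Ici t ∩ Iio (t + δ) ∈ nhdsWithin t (Ici t) := by
          apply Filter.inter_mem self_mem_nhdsWithin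
          exact nhdsWithin_le_nhds (Iio_mem_nhds (by linarith))
        filter_upwards [hmem] with u hu
        rw [if_neg hPt, if_neg]
        rintro ⟨s, hs0, hsu, hx⟩
        exact hnohit ⟨s, hs0, hsu.trans (le_of_lt hu.2), hx⟩
    have hall : ∀ᶠ u in nhdsWithin t (Ici t),
        (fun u => GammaN α N X0 B L u ω) u = GammaN α N X0 B L t ω := by
      have := Filter.eventually_all.mpr hind
      filter_upwards [this, self_mem_nhdsWithin] with u hu (htu : t ≤ u)
      unfold GammaN
      rw [if_pos (ht.trans htu), if_pos ht]
      congr 1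
      exact Finset.sum_congr rfl (fun i _ => hu i)
    exact (continuousWithinAt_const (b := GammaN α N X0 B L t ω)).congr_of_eventuallyEq
      hall rfl

lemma iterL_rightCont (ω : Ω) (hB : ∀ i, Continuous (fun u => B i u ω)) (k : ℕ) (t : ℝ) :
    ContinuousWithinAt (fun u => iterL α N X0 B k u ω) (Ici t) t := by
  induction k generalizing t with
  | zero => exact continuousWithinAt_const
  | succ k ih =>
    have : (fun u => iterL α N X0 B (k + 1) u ω)
        = fun u => GammaN α N X0 B (iterL α N X0 B k) u ω := by
      funext u; rw [iterL_succ]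
    rw [this]
    exact gammaN_rightCont α N X0 B _ ω (fun s => ih s) hB t

end ContAux


section MinAux

variable {Ω : Type} (α : ℝ) (N : ℕ) (X0 : Fin N → Ω → ℝ) (B : Fin N → ℝ → Ω → ℝ)

lemma InM_nonneg {ℓ : ℝ → ℝ} (hm : InM ℓ) (t : ℝ) : 0 ≤ ℓ t := by
  rcases lt_or_ge t 0 with ht | ht
  · rw [hm.2.2.1 t ht]
  · have h1 : ℓ (-1) = 0 := hm.2.2.1 (-1) (by norm_num)
    have := hm.1 (show (-1:ℝ) ≤ t by linarith)
    linarith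

lemma iterL_le_fixed (hα : 0 ≤ α) (L' : ℝ → Ω → ℝ) (ω : Ω) (hm : InM (fun t => L' t ω))
    (hfix : ∀ t, L' t ω = GammaN α N X0 B L' t ω) (k : ℕ) (t : ℝ) :
    iterL α N X0 B k t ω ≤ L' t ω := by
  induction k generalizing t with
  | zero => exact InM_nonneg hm t
  | succ k ih =>
    rw [iterL_succ]
    calc GammaN α N X0 B (iterL α N X0 B k) t ω
        ≤ GammaN α N X0 B L' t ω := gammaN_mono_L α N X0 B hα _ _ ω (fun s => ih s) t
      _ = L' t ω := (hfix t).symm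

end MinAux

/-- For every `N`, `L̲^N := Γ_N^(N)[0]` is the minimal solution to the
`N`-particle system, and `‖Γ_N^(k)[0] - L̲^N‖_∞ ≤ (N-k)⁺/N` almost surely for every `k`. -/
theorem particle_minimal_iteration {Ω : Type} [MeasurableSpace Ω] (P : Measure Ω)
    [IsProbabilityMeasure P] (α : ℝ) (hα : 0 < α) (N : ℕ) (hN : 1 ≤ N)
    (X0 : Fin N → Ω → ℝ) (B : Fin N → ℝ → Ω → ℝ)
    (hmeas : ∀ i, Measurable (X0 i))
    (hsupp : ∀ᵐ ω ∂P, ∀ i, 0 ≤ X0 i ω)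
    (hBM : ∀ i, IsBrownianMotion P (B i))
    (hiid : iIndepFun
      (fun i : Fin N => fun ω => (X0 i ω, fun t : ℝ => B i t ω)) P)
    (hident : ∀ i j, Measure.map (X0 i) P = Measure.map (X0 j) P)
    (hXB : ∀ i, IndepFun (X0 i) (fun ω => fun t : ℝ => B i t ω) P) :
    IsMinimalParticleSolution P α N X0 B
      ((GammaN α N X0 B)^[N] (fun _ : ℝ => fun _ : Ω => (0 : ℝ))) ∧
    ∀ k : ℕ, ∀ᵐ ω ∂P, ∀ t : ℝ,
      |(GammaN α N X0 B)^[k] (fun _ : ℝ => fun _ : Ω => (0 : ℝ)) t ω -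
          (GammaN α N X0 B)^[N] (fun _ : ℝ => fun _ : Ω => (0 : ℝ)) t ω| ≤
        max ((N : ℝ) - (k : ℝ)) 0 / (N : ℝ) := by
  have hBcont : ∀ᵐ ω ∂P, ∀ i, Continuous (fun u => B i u ω) :=
    ae_all_iff.mpr (fun i => ((hBM i).2.1).mono fun ω h => h.2)
  refine ⟨⟨?_, ?_⟩, ?_⟩
  · -- `iterL N` is a particle solution
    filter_upwards [hBcont] with ω hω
    constructor
    · refine ⟨?_, ?_, ?_, ?_⟩
      · exact iterL_mono_t α N X0 B N ω
      · exact fun t => iterL_rightCont α N X0 B ω hω N t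
      · exact fun t ht => iterL_neg α N X0 B N t ω ht
      · exact fun t => iterL_le_one α N X0 B hN N t ω
    · intro t
      have h1 : GammaN α N X0 B (iterL α N X0 B N) t ω = iterL α N X0 B (N + 1) t ω :=
        (congrFun (congrFun (iterL_succ α N X0 B N) t) ω).symm
      have h2 := iterL_stab α N X0 B hα.le hN t ω
      show iterL α N X0 B N t ω = GammaN α N X0 B (iterL α N X0 B N) t ω
      rw [h1, h2]
  · -- minimality
    intro L' hsol
    filter_upwards [hsol] with ω hω
    intro t
    exact iterL_le_fixed α N X0 B hα.le L' ω hω.1 (hω.2) N t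
  · -- error bound
    intro k
    apply Filter.Eventually.of_forall
    intro ω t
    exact iterL_error α N X0 B hα.le hN k t ω

end
end

section
/- For every N ∈ ℕ, the physical solution to the N-particle system is equal to the minimal solution to the N-particle system; in particular, the physical solution is pathwise unique. -/
open MeasureTheory ProbabilityTheory Filter Set
open scoped ENNReal NNReal Topology Classical

noncomputable section

section AuxDet
open Function

/-- dead-by-t set -/
def deadSet (α : ℝ) {N : ℕ} (f : Fin N → ℝ → ℝ) (ℓ : ℝ → ℝ) (t : ℝ) : Finset (Fin N) :=
  Finset.univ.filter (fun i => ∃ s, 0 ≤ s ∧ s ≤ t ∧ f i s - α * ℓ s ≤ 0)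

/-- dead-strictly-before-t set -/
def deadBefore (α : ℝ) {N : ℕ} (f : Fin N → ℝ → ℝ) (ℓ : ℝ → ℝ) (t : ℝ) : Finset (Fin N) :=
  Finset.univ.filter (fun i => ∃ s, 0 ≤ s ∧ s < t ∧ f i s - α * ℓ s ≤ 0)

lemma sol_card (α : ℝ) {N : ℕ} (f : Fin N → ℝ → ℝ) (ℓ : ℝ → ℝ)
    (hfix : ∀ t : ℝ, 0 ≤ t → ℓ t = (N:ℝ)⁻¹ * ∑ i : Fin N,
      (if ∃ s, 0 ≤ s ∧ s ≤ t ∧ f i s - α * ℓ s ≤ 0 then (1:ℝ) else 0))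
    {t : ℝ} (ht : 0 ≤ t) :
    ℓ t = (N:ℝ)⁻¹ * (deadSet α f ℓ t).card := by
  rw [hfix t ht]
  congr 1
  exact Finset.sum_boole ..

/-- Eventual constancy to the left. -/
lemma sol_eventually_left (α : ℝ) {N : ℕ} (hN : 1 ≤ N) (f : Fin N → ℝ → ℝ) (ℓ : ℝ → ℝ)
    {t : ℝ} (ht : 0 < t) :
    ∀ᶠ s in nhdsWithin t (Iio t), deadSet α f ℓ s = deadBefore α f ℓ t := by
  classical
  have hw : ∀ i : Fin N, ∃ s : ℝ, (0 ≤ s ∧ s < t) ∧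
      (i ∈ deadBefore α f ℓ t → f i s - α * ℓ s ≤ 0) := by
    intro i
    by_cases hi : i ∈ deadBefore α f ℓ t
    · obtain ⟨s, hs0, hst, hsle⟩ := (Finset.mem_filter.mp hi).2
      exact ⟨s, ⟨hs0, hst⟩, fun _ => hsle⟩
    · exact ⟨0, ⟨le_refl 0, ht⟩, fun h => absurd h hi⟩
  choose w hw1 hw2 using hw
  have hne : (Finset.univ : Finset (Fin N)).Nonempty := by
    simpa [Finset.univ_nonempty_iff] using Fin.pos_iff_nonempty.mp hN
  set s₀ := Finset.univ.sup' hne w with hs₀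
  have hs₀0 : 0 ≤ s₀ := by
    obtain ⟨i, _, hi⟩ := Finset.exists_mem_eq_sup' hne w
    rw [hs₀, hi]; exact (hw1 i).1
  have hs₀t : s₀ < t := by
    rw [hs₀, Finset.sup'_lt_iff]
    exact fun i _ => (hw1 i).2
  filter_upwards [Ioo_mem_nhdsLT hs₀t] with s hs
  ext i
  simp only [deadSet, deadBefore, Finset.mem_filter, Finset.mem_univ, true_and]
  constructor
  · rintro ⟨u, hu0, hus, hule⟩
    exact ⟨u, hu0, lt_of_le_of_lt hus hs.2, hule⟩
  · intro hi
    refine ⟨w i, (hw1 i).1, le_trans (Finset.le_sup' w (Finset.mem_univ i)) hs.1.le,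
      hw2 i (by simpa [deadBefore] using hi)⟩

lemma sol_leftLim (α : ℝ) {N : ℕ} (hN : 1 ≤ N) (f : Fin N → ℝ → ℝ) (ℓ : ℝ → ℝ)
    (hℓ : InM ℓ)
    (hfix : ∀ t : ℝ, 0 ≤ t → ℓ t = (N:ℝ)⁻¹ * ∑ i : Fin N,
      (if ∃ s, 0 ≤ s ∧ s ≤ t ∧ f i s - α * ℓ s ≤ 0 then (1:ℝ) else 0))
    {t : ℝ} (ht : 0 ≤ t) :
    Function.leftLim ℓ t = (N:ℝ)⁻¹ * (deadBefore α f ℓ t).card := by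
  rcases eq_or_lt_of_le ht with h0 | h0
  · -- t = 0
    have hdb : deadBefore α f ℓ t = ∅ := by
      ext i
      simp only [deadBefore, Finset.mem_filter, Finset.mem_univ, true_and, Finset.notMem_empty,
        iff_false]
      rintro ⟨s, hs0, hst, -⟩
      exact absurd (lt_of_le_of_lt hs0 hst) (by rw [← h0]; exact lt_irrefl 0)
    rw [hdb]
    simp only [Finset.card_empty, Nat.cast_zero, mul_zero]
    refine leftLim_eq_of_tendsto ?_
    refine Tendsto.congr' ?_ tendsto_const_nhds
    filter_upwards [self_mem_nhdsWithin] with s hs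
    exact (hℓ.2.2.1 s (by rw [← h0] at hs; exact hs)).symm
  · -- 0 < t
    refine leftLim_eq_of_tendsto ?_
    refine Tendsto.congr' ?_ tendsto_const_nhds
    filter_upwards [sol_eventually_left α hN f ℓ h0, Ioo_mem_nhdsLT h0] with s hs hs'
    rw [sol_card α f ℓ hfix hs'.1.le, hs]


lemma leftLim_zero_of_InM {ℓ : ℝ → ℝ} (hℓ : InM ℓ) : Function.leftLim ℓ 0 = 0 := by
  refine leftLim_eq_of_tendsto ?_
  refine Tendsto.congr' ?_ tendsto_const_nhds
  filter_upwards [self_mem_nhdsWithin] with s hs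
  exact (hℓ.2.2.1 s hs).symm

lemma path_leftLim (α : ℝ) {g ℓ : ℝ → ℝ} (hg : Continuous g) (hℓ : InM ℓ)
    {t : ℝ} (ht : 0 ≤ t) :
    Function.leftLim (fun u => if u < 0 then g 0 else g u - α * ℓ u) t
      = g t - α * Function.leftLim ℓ t := by
  rcases eq_or_lt_of_le ht with h0 | h0
  · subst h0
    rw [leftLim_zero_of_InM hℓ, mul_zero, sub_zero]
    refine leftLim_eq_of_tendsto ?_
    refine Tendsto.congr' ?_ tendsto_const_nhds
    filter_upwards [self_mem_nhdsWithin] with s (hs : s ∈ Iio (0:ℝ))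
    exact (if_pos hs).symm
  · refine leftLim_eq_of_tendsto ?_
    have h1 : Tendsto g (nhdsWithin t (Iio t)) (nhds (g t)) :=
      (hg.tendsto t).mono_left nhdsWithin_le_nhds
    have h2 : Tendsto ℓ (nhdsWithin t (Iio t)) (nhds (Function.leftLim ℓ t)) :=
      hℓ.1.tendsto_leftLim t
    refine Tendsto.congr' ?_ (h1.sub (h2.const_mul α))
    filter_upwards [Ioo_mem_nhdsLT h0] with s hs
    simp [not_lt.mpr hs.1.le]

lemma sol_split (α : ℝ) {N : ℕ} (f : Fin N → ℝ → ℝ) (ℓ : ℝ → ℝ)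
    (hfix : ∀ t : ℝ, 0 ≤ t → ℓ t = (N:ℝ)⁻¹ * ∑ i : Fin N,
      (if ∃ s, 0 ≤ s ∧ s ≤ t ∧ f i s - α * ℓ s ≤ 0 then (1:ℝ) else 0))
    {t : ℝ} (ht : 0 ≤ t) :
    ℓ t = (N:ℝ)⁻¹ * (deadBefore α f ℓ t).card
      + (N:ℝ)⁻¹ * ((Finset.univ.filter (fun i =>
          ¬(∃ s, 0 ≤ s ∧ s < t ∧ f i s - α * ℓ s ≤ 0) ∧ f i t - α * ℓ t ≤ 0)).card) := by
  classical
  set NewD := Finset.univ.filter (fun i =>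
    ¬(∃ s, 0 ≤ s ∧ s < t ∧ f i s - α * ℓ s ≤ 0) ∧ f i t - α * ℓ t ≤ 0) with hNewD
  have hunion : deadSet α f ℓ t = deadBefore α f ℓ t ∪ NewD := by
    ext i
    simp only [deadSet, deadBefore, hNewD, Finset.mem_union, Finset.mem_filter,
      Finset.mem_univ, true_and]
    constructor
    · rintro ⟨s, hs0, hsT, hle⟩
      rcases lt_or_eq_of_le hsT with h | h
      · exact Or.inl ⟨s, hs0, h, hle⟩
      · subst h
        by_cases hb : ∃ s', 0 ≤ s' ∧ s' < s ∧ f i s' - α * ℓ s' ≤ 0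
        · obtain ⟨s', h1, h2, h3⟩ := hb
          exact Or.inl ⟨s', h1, h2, h3⟩
        · exact Or.inr ⟨hb, hle⟩
    · rintro (⟨s, hs0, hsT, hle⟩ | ⟨-, hle⟩)
      · exact ⟨s, hs0, hsT.le, hle⟩
      · exact ⟨t, ht, le_rfl, hle⟩
  have hdisj : Disjoint (deadBefore α f ℓ t) NewD := by
    rw [Finset.disjoint_left]
    intro i hi hi2
    exact (Finset.mem_filter.mp hi2).2.1 (Finset.mem_filter.mp hi).2
  have hcard : (deadSet α f ℓ t).card
      = (deadBefore α f ℓ t).card + NewD.card := by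
    rw [hunion, Finset.card_union_of_disjoint hdisj]
  rw [sol_card α f ℓ hfix ht, hcard]
  push_cast
  ring

lemma det_min (α : ℝ) (hα : 0 ≤ α) {N : ℕ} (hN : 1 ≤ N)
    (f : Fin N → ℝ → ℝ) (hf : ∀ i, Continuous (f i))
    (ℓ ℓ' : ℝ → ℝ) (hℓ : InM ℓ) (hℓ' : InM ℓ')
    (hfix : ∀ t : ℝ, 0 ≤ t → ℓ t = (N:ℝ)⁻¹ * ∑ i : Fin N,
      (if ∃ s, 0 ≤ s ∧ s ≤ t ∧ f i s - α * ℓ s ≤ 0 then (1:ℝ) else 0))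
    (hfix' : ∀ t : ℝ, 0 ≤ t → ℓ' t = (N:ℝ)⁻¹ * ∑ i : Fin N,
      (if ∃ s, 0 ≤ s ∧ s ≤ t ∧ f i s - α * ℓ' s ≤ 0 then (1:ℝ) else 0))
    (hphys : ∀ t : ℝ, 0 ≤ t →
      ℓ t - Function.leftLim ℓ t =
        sInf {r : ℝ | ∃ k : ℕ, r = (k : ℝ) / N ∧
          (N : ℝ)⁻¹ * (∑ i : Fin N,
            (if ((∀ s, 0 ≤ s → s < t → 0 < f i s - α * ℓ s) ∧
                Function.leftLim (fun u => if u < 0 then f i 0 else f i u - α * ℓ u) t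
                  ∈ Icc (0 : ℝ) (α * (k : ℝ) / N))
              then (1 : ℝ) else 0)) ≤ (k : ℝ) / N}) :
    ∀ t, ℓ t ≤ ℓ' t := by
  classical
  have hNpos : (0:ℝ) < N := by exact_mod_cast hN
  have hNinv : (0:ℝ) < (N:ℝ)⁻¹ := inv_pos.mpr hNpos
  by_contra hcon
  push_neg at hcon
  set A : Set ℝ := {t | ℓ' t < ℓ t} with hA
  have hAne : A.Nonempty := by
    obtain ⟨t, ht⟩ := hcon
    exact ⟨t, ht⟩
  have h0lb : ∀ t ∈ A, (0:ℝ) ≤ t := by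
    intro t ht
    by_contra h
    push_neg at h
    have h1 := hℓ.2.2.1 t h
    have h2 := hℓ'.2.2.1 t h
    simp only [hA, mem_setOf_eq] at ht
    rw [h1, h2] at ht
    exact lt_irrefl 0 ht
  have hAbdd : BddBelow A := ⟨0, h0lb⟩
  set T := sInf A with hT
  have hT0 : 0 ≤ T := le_csInf hAne h0lb
  have hsle : ∀ s, s < T → ℓ s ≤ ℓ' s := by
    intro s hs
    by_contra h
    push_neg at h
    exact absurd (csInf_le hAbdd (show s ∈ A from h)) (not_le.mpr hs)
  -- sequence approaching T from the right inside A
  have hseq : ∀ n : ℕ, ∃ t, t ∈ A ∧ t < T + 1/((n:ℝ)+1) := by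
    intro n
    obtain ⟨t, htA, hlt⟩ := exists_lt_of_csInf_lt hAne
      (lt_add_of_pos_right T (by positivity : (0:ℝ) < 1/((n:ℝ)+1)))
    exact ⟨t, htA, hlt⟩
  choose u hu1 hu2 using hseq
  have hTu : ∀ n, T ≤ u n := fun n => csInf_le hAbdd (hu1 n)
  have hgap : ∀ n, (N:ℝ)⁻¹ ≤ ℓ (u n) - ℓ' (u n) := by
    intro n
    have h0u : 0 ≤ u n := le_trans hT0 (hTu n)
    have h1 := sol_card α f ℓ hfix h0u
    have h2 := sol_card α f ℓ' hfix' h0u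
    have hlt : ℓ' (u n) < ℓ (u n) := hu1 n
    rw [h1, h2] at hlt ⊢
    have hcards : (deadSet α f ℓ' (u n)).card < (deadSet α f ℓ (u n)).card := by
      by_contra h
      push_neg at h
      have : ((deadSet α f ℓ (u n)).card : ℝ) ≤ (deadSet α f ℓ' (u n)).card := by
        exact_mod_cast h
      nlinarith
    have hc1 : ((deadSet α f ℓ' (u n)).card : ℝ) + 1 ≤ (deadSet α f ℓ (u n)).card := by
      exact_mod_cast hcards
    nlinarith
  have hulim : Tendsto u atTop (nhds T) := by
    have h1 : Tendsto (fun n : ℕ => T + 1/((n:ℝ)+1)) atTop (nhds T) := by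
      have h2 := tendsto_one_div_add_atTop_nhds_zero_nat (𝕜 := ℝ)
      simpa using tendsto_const_nhds.add h2
    exact tendsto_of_tendsto_of_tendsto_of_le_of_le tendsto_const_nhds h1 hTu
      (fun n => (hu2 n).le)
  have huwithin : Tendsto u atTop (nhdsWithin T (Ici T)) :=
    tendsto_nhdsWithin_of_tendsto_nhds_of_eventually_within u hulim
      (Eventually.of_forall hTu)
  have hcont : Tendsto (fun n => ℓ (u n) - ℓ' (u n)) atTop (nhds (ℓ T - ℓ' T)) :=
    (Tendsto.comp (hℓ.2.1 T) huwithin).sub (Tendsto.comp (hℓ'.2.1 T) huwithin)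
  have hTgap : (N:ℝ)⁻¹ ≤ ℓ T - ℓ' T := ge_of_tendsto hcont (Eventually.of_forall hgap)
  have hTlt : ℓ' T < ℓ T := by linarith
  -- analysis at time T
  set DB := deadBefore α f ℓ T with hDB
  set DB' := deadBefore α f ℓ' T with hDB'
  have hm : Function.leftLim ℓ T = (N:ℝ)⁻¹ * DB.card := sol_leftLim α hN f ℓ hℓ hfix hT0
  have hDBsub : DB ⊆ DB' := by
    intro i hi
    simp only [hDB, hDB', deadBefore, Finset.mem_filter, Finset.mem_univ, true_and] at hi ⊢
    obtain ⟨s, hs0, hsT, hle⟩ := hi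
    refine ⟨s, hs0, hsT, ?_⟩
    have := mul_le_mul_of_nonneg_left (hsle s hsT) hα
    linarith
  set NewD' := Finset.univ.filter (fun i =>
    ¬(∃ s, 0 ≤ s ∧ s < T ∧ f i s - α * ℓ' s ≤ 0) ∧ f i T - α * ℓ' T ≤ 0) with hNewD'
  have hsplit' : ℓ' T = (N:ℝ)⁻¹ * DB'.card + (N:ℝ)⁻¹ * NewD'.card :=
    sol_split α f ℓ' hfix' hT0
  set k' := NewD'.card with hk'
  set d := (DB' \ DB).card with hd0
  have hd : DB'.card = DB.card + d := by
    have h1 := Finset.card_sdiff_of_subset hDBsub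
    have h2 := Finset.card_le_card hDBsub
    omega
  -- the counting function G
  set G : ℕ → ℕ := fun k => (Finset.univ.filter (fun i =>
      ¬(∃ s, 0 ≤ s ∧ s < T ∧ f i s - α * ℓ s ≤ 0) ∧
      f i T - α * ((N:ℝ)⁻¹ * DB.card) ∈ Icc (0:ℝ) (α * (k:ℝ)/N))).card with hG
  have hsum : ∀ k : ℕ, (∑ i : Fin N,
      (if ((∀ s, 0 ≤ s → s < T → 0 < f i s - α * ℓ s) ∧
          Function.leftLim (fun u => if u < 0 then f i 0 else f i u - α * ℓ u) T
            ∈ Icc (0 : ℝ) (α * (k : ℝ) / N))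
        then (1 : ℝ) else 0)) = G k := by
    intro k
    have hcond : ∀ i : Fin N,
        ((∀ s, 0 ≤ s → s < T → 0 < f i s - α * ℓ s) ∧
          Function.leftLim (fun u => if u < 0 then f i 0 else f i u - α * ℓ u) T
            ∈ Icc (0 : ℝ) (α * (k : ℝ) / N))
        ↔ ((¬∃ s, 0 ≤ s ∧ s < T ∧ f i s - α * ℓ s ≤ 0) ∧
          f i T - α * ((N:ℝ)⁻¹ * DB.card) ∈ Icc (0:ℝ) (α * (k:ℝ)/N)) := by
      intro i
      rw [path_leftLim α (hf i) hℓ hT0, hm]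
      simp only [not_exists, not_and, not_le]
    rw [Finset.sum_congr rfl (fun i _ => if_congr (hcond i) rfl rfl)]
    exact Finset.sum_boole ..
  have hmem : ∀ k : ℕ, ((N : ℝ)⁻¹ * (∑ i : Fin N,
      (if ((∀ s, 0 ≤ s → s < T → 0 < f i s - α * ℓ s) ∧
          Function.leftLim (fun u => if u < 0 then f i 0 else f i u - α * ℓ u) T
            ∈ Icc (0 : ℝ) (α * (k : ℝ) / N))
        then (1 : ℝ) else 0)) ≤ (k : ℝ) / N) ↔ G k ≤ k := by
    intro k
    rw [hsum k, div_eq_inv_mul, mul_le_mul_iff_right₀ hNinv]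
    exact Nat.cast_le
  have hexN : G N ≤ N := by
    calc G N ≤ (Finset.univ : Finset (Fin N)).card := Finset.card_filter_le _ _
    _ = N := by simp
  have hex : ∃ k, G k ≤ k := ⟨N, hexN⟩
  set k₀ := Nat.find hex with hk₀
  have hSinf : sInf {r : ℝ | ∃ k : ℕ, r = (k : ℝ) / N ∧
      (N : ℝ)⁻¹ * (∑ i : Fin N,
        (if ((∀ s, 0 ≤ s → s < T → 0 < f i s - α * ℓ s) ∧
            Function.leftLim (fun u => if u < 0 then f i 0 else f i u - α * ℓ u) T
              ∈ Icc (0 : ℝ) (α * (k : ℝ) / N))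
          then (1 : ℝ) else 0)) ≤ (k : ℝ) / N} = (k₀ : ℝ)/N := by
    have hbdd : BddBelow {r : ℝ | ∃ k : ℕ, r = (k : ℝ) / N ∧
        (N : ℝ)⁻¹ * (∑ i : Fin N,
          (if ((∀ s, 0 ≤ s → s < T → 0 < f i s - α * ℓ s) ∧
              Function.leftLim (fun u => if u < 0 then f i 0 else f i u - α * ℓ u) T
                ∈ Icc (0 : ℝ) (α * (k : ℝ) / N))
            then (1 : ℝ) else 0)) ≤ (k : ℝ) / N} := by
      refine ⟨0, ?_⟩
      rintro r ⟨k, rfl, -⟩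
      positivity
    apply le_antisymm
    · exact csInf_le hbdd ⟨k₀, rfl, (hmem k₀).mpr (Nat.find_spec hex)⟩
    · refine le_csInf ⟨(N:ℝ)/N, N, rfl, (hmem N).mpr hexN⟩ ?_
      rintro r ⟨k, rfl, hk⟩
      have h1 : k₀ ≤ k := Nat.find_min' hex ((hmem k).mp hk)
      have h2 : (k₀:ℝ) ≤ k := by exact_mod_cast h1
      exact div_le_div_of_nonneg_right h2 hNpos.le
  -- key counting inequality: G (k' + d) ≤ k' + d
  have hkey : G (k' + d) ≤ k' + d := by
    have hsub : (Finset.univ.filter (fun i =>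
        ¬(∃ s, 0 ≤ s ∧ s < T ∧ f i s - α * ℓ s ≤ 0) ∧
        f i T - α * ((N:ℝ)⁻¹ * DB.card) ∈ Icc (0:ℝ) (α * ((k' + d : ℕ):ℝ)/N)))
        ⊆ (DB' \ DB) ∪ NewD' := by
      intro i hi
      simp only [Finset.mem_filter, Finset.mem_univ, true_and, mem_Icc] at hi
      obtain ⟨hiDB, hi0, hile⟩ := hi
      have hcast : ((DB'.card : ℕ) : ℝ) = (DB.card : ℝ) + d := by exact_mod_cast hd
      have hfle : f i T - α * ℓ' T ≤ 0 := by
        rw [hsplit', hcast]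
        push_cast at hile
        have hNne : (N:ℝ) ≠ 0 := ne_of_gt hNpos
        have hident : α * ((k':ℝ) + (d:ℝ))/N
            = α * ((N:ℝ)⁻¹ * (k':ℝ)) + α * ((N:ℝ)⁻¹ * (d:ℝ)) := by
          field_simp
        rw [hident] at hile
        nlinarith
      have hiDBfin : i ∉ DB := by
        intro hmem2
        exact hiDB ((Finset.mem_filter.mp hmem2).2)
      by_cases hDB'mem : i ∈ DB'
      · exact Finset.mem_union_left _ (Finset.mem_sdiff.mpr ⟨hDB'mem, hiDBfin⟩)
      · refine Finset.mem_union_right _ ?_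
        simp only [hNewD', Finset.mem_filter, Finset.mem_univ, true_and]
        refine ⟨?_, hfle⟩
        intro hcontra
        exact hDB'mem (by
          simp only [hDB', deadBefore, Finset.mem_filter, Finset.mem_univ, true_and]
          exact hcontra)
    calc G (k' + d) ≤ ((DB' \ DB) ∪ NewD').card := Finset.card_le_card hsub
      _ ≤ (DB' \ DB).card + NewD'.card := Finset.card_union_le _ _
      _ = k' + d := by omega
  have hk0le : k₀ ≤ k' + d := Nat.find_min' hex hkey
  -- conclude ℓ T ≤ ℓ' T, contradiction
  have h1 : ℓ T = (N:ℝ)⁻¹ * DB.card + (k₀ : ℝ)/N := by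
    have h2 := hphys T hT0
    rw [hSinf, hm] at h2
    linarith
  have h4 : (k₀ : ℝ) ≤ (k':ℝ) + (d:ℝ) := by exact_mod_cast hk0le
  have hcast : ((DB'.card : ℕ) : ℝ) = (DB.card : ℝ) + d := by exact_mod_cast hd
  have hfin : ℓ T ≤ ℓ' T := by
    rw [h1, hsplit', hcast]
    have h5 : (k₀ : ℝ)/N ≤ ((k':ℝ) + (d:ℝ))/N := div_le_div_of_nonneg_right h4 hNpos.le
    have h6 : ((k':ℝ) + (d:ℝ))/N = (N:ℝ)⁻¹ * (k':ℝ) + (N:ℝ)⁻¹ * (d:ℝ) := by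
      field_simp
    rw [h6] at h5
    linarith
  exact absurd hfin (not_le.mpr hTlt)

end AuxDet

/-- For every `N`, the physical solution to the `N`-particle system is equal
to the minimal solution; in particular, the physical solution is pathwise unique. -/
theorem physical_eq_minimal_particle {Ω : Type} [MeasurableSpace Ω] (P : Measure Ω)
    [IsProbabilityMeasure P] (α : ℝ) (hα : 0 < α) (N : ℕ) (hN : 1 ≤ N)
    (X0 : Fin N → Ω → ℝ) (B : Fin N → ℝ → Ω → ℝ)
    (hmeas : ∀ i, Measurable (X0 i))
    (hsupp : ∀ᵐ ω ∂P, ∀ i, 0 ≤ X0 i ω)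
    (hBM : ∀ i, IsBrownianMotion P (B i))
    (hiid : iIndepFun
      (fun i : Fin N => fun ω => (X0 i ω, fun t : ℝ => B i t ω)) P)
    (hident : ∀ i j, Measure.map (X0 i) P = Measure.map (X0 j) P)
    (hXB : ∀ i, IndepFun (X0 i) (fun ω => fun t : ℝ => B i t ω) P) :
    (∀ L : ℝ → Ω → ℝ, IsPhysicalParticleSolution P α N X0 B L →
      IsMinimalParticleSolution P α N X0 B L) ∧
    ∀ L L' : ℝ → Ω → ℝ, IsPhysicalParticleSolution P α N X0 B L →
      IsPhysicalParticleSolution P α N X0 B L' → ∀ᵐ ω ∂P, ∀ t, L t ω = L' t ω := by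
  have key : ∀ L : ℝ → Ω → ℝ, IsPhysicalParticleSolution P α N X0 B L →
      IsMinimalParticleSolution P α N X0 B L := by
    intro L hL
    refine ⟨hL.1, ?_⟩
    intro L' hL'
    have hBcont : ∀ᵐ ω ∂P, ∀ i, Continuous fun t => B i t ω :=
      ae_all_iff.mpr fun i => ((hBM i).2.1).mono fun ω h => h.2
    filter_upwards [hL.1, hL.2, hL', hBcont] with ω hsol hphys hsol' hcont
    intro t
    refine det_min α hα.le hN (fun i s => X0 i ω + B i s ω)
      (fun i => continuous_const.add (hcont i))
      (fun t => L t ω) (fun t => L' t ω) hsol.1 hsol'.1 ?_ ?_ ?_ t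
    · intro t ht
      beta_reduce
      rw [hsol.2 t]
      simp only [GammaN, if_pos ht]
    · intro t ht
      beta_reduce
      rw [hsol'.2 t]
      simp only [GammaN, if_pos ht]
    · intro t ht
      exact hphys t ht
  refine ⟨key, ?_⟩
  intro L L' hL hL'
  have h1 := (key L hL).2 L' hL'.1
  have h2 := (key L' hL').2 L hL.1
  filter_upwards [h1, h2] with ω ha hb
  intro t
  exact le_antisymm (ha t) (hb t)

end
end
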